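/- arXiv:1304.7714 — 4 statements merged into one kernel-verified Lean document; each statement's English description precedes it below -/
import Mathlib

section
/- For an indecomposable countable limit ordinal α (i.e., α = ω^δ for some δ > 0) and any subset A ⊆ α, either A has order type α or its complement α \ A has order type α. -/
open Ordinal Set Order

universe u

/-- Natural (Hessenberg) sum of ordinals. -/
noncomputable def nadd (a b : Ordinal.{u}) : Ordinal.{u} :=
  sInf {o | (∀ a' : Set.Iio a, nadd a'.1 b < o) ∧ ∀ b' : Set.Iio b, nadd a b'.1 < o}
termination_by (a, b)
decreasing_by
  · exact Prod.Lex.left _ _ a'.2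
  · exact Prod.Lex.right _ b'.2

infixl:65 " ♯ " => nadd

lemma nadd_mem (a b : Ordinal.{u}) :
    (∀ a' < a, a' ♯ b < a ♯ b) ∧ ∀ b' < b, a ♯ b' < a ♯ b := by
  have hne : {o | (∀ a' : Set.Iio a, nadd a'.1 b < o) ∧ ∀ b' : Set.Iio b, nadd a b'.1 < o}.Nonempty := by
    obtain ⟨x, hx⟩ := Ordinal.bddAbove_of_small
      (s := (fun a' : Set.Iio a => nadd a'.1 b) '' Set.univ)
    obtain ⟨y, hy⟩ := Ordinal.bddAbove_of_small
      (s := (fun b' : Set.Iio b => nadd a b'.1) '' Set.univ)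
    refine ⟨succ (max x y), fun a' => ?_, fun b' => ?_⟩
    · exact lt_succ_iff.2 ((hx ⟨a', trivial, rfl⟩).trans (le_max_left _ _))
    · exact lt_succ_iff.2 ((hy ⟨b', trivial, rfl⟩).trans (le_max_right _ _))
  have h := csInf_mem hne
  rw [← nadd] at h
  exact ⟨fun a' ha' => h.1 ⟨a', ha'⟩, fun b' hb' => h.2 ⟨b', hb'⟩⟩

lemma nadd_le_iff {a b c : Ordinal.{u}} :
    b ♯ c ≤ a ↔ (∀ b' < b, b' ♯ c < a) ∧ ∀ c' < c, b ♯ c' < a := by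
  constructor
  · intro h
    exact ⟨fun b' hb' => ((nadd_mem b c).1 b' hb').trans_le h,
      fun c' hc' => ((nadd_mem b c).2 c' hc').trans_le h⟩
  · rintro ⟨h1, h2⟩
    rw [nadd]
    exact csInf_le' ⟨fun b' => h1 _ b'.2, fun c' => h2 _ c'.2⟩

lemma nadd_lt_nadd_right {b c : Ordinal.{u}} (h : b < c) (a : Ordinal.{u}) : b ♯ a < c ♯ a :=
  (nadd_mem c a).1 b h

lemma nadd_lt_nadd_left {b c : Ordinal.{u}} (h : b < c) (a : Ordinal.{u}) : a ♯ b < a ♯ c :=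
  (nadd_mem a c).2 b h

lemma nadd_le_nadd_right {b c : Ordinal.{u}} (h : b ≤ c) (a : Ordinal.{u}) : b ♯ a ≤ c ♯ a := by
  rcases h.lt_or_eq with h | rfl
  · exact (nadd_lt_nadd_right h a).le
  · exact le_rfl

lemma nadd_le_nadd_left {b c : Ordinal.{u}} (h : b ≤ c) (a : Ordinal.{u}) : a ♯ b ≤ a ♯ c := by
  rcases h.lt_or_eq with h | rfl
  · exact (nadd_lt_nadd_left h a).le
  · exact le_rfl

lemma nadd_lt_nadd_of_lt_of_le {a b c d : Ordinal.{u}} (h₁ : a < b) (h₂ : c ≤ d) :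
    a ♯ c < b ♯ d :=
  (nadd_lt_nadd_right h₁ c).trans_le (nadd_le_nadd_left h₂ b)

lemma nadd_lt_nadd_of_le_of_lt {a b c d : Ordinal.{u}} (h₁ : a ≤ b) (h₂ : c < d) :
    a ♯ c < b ♯ d :=
  (nadd_le_nadd_right h₁ c).trans_lt (nadd_lt_nadd_left h₂ b)

lemma nadd_zero (a : Ordinal.{u}) : a ♯ 0 = a := by
  induction a using Ordinal.induction with
  | h a IH =>
  apply le_antisymm
  · rw [nadd_le_iff]
    refine ⟨fun a' ha' => by rw [IH a' ha']; exact ha', fun c' hc' => absurd hc' (not_lt_of_ge (zero_le (a := c')))⟩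
  · by_contra hlt
    push_neg at hlt
    have h1 := nadd_lt_nadd_right hlt 0
    rw [IH _ hlt] at h1
    exact lt_irrefl _ h1


-- Step 1: nadd principality of ω^γ
lemma nadd_key (e : Ordinal) (hW : ∀ x < omega0 ^ e, ∀ y < omega0 ^ e, x ♯ y < omega0 ^ e) :
    ∀ a, ∀ b, a < omega0 ^ e * omega0 → b < omega0 ^ e * omega0 →
      a ♯ b ≤ omega0 ^ e * (a / omega0 ^ e + b / omega0 ^ e) +
        (a % omega0 ^ e ♯ b % omega0 ^ e) := by
  intro a
  induction a using Ordinal.induction with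
  | h a IHa =>
  intro b
  induction b using Ordinal.induction with
  | h b IHb =>
  intro ha hb
  set W := omega0 ^ e with hWdef
  have W0 : W ≠ 0 := opow_ne_zero _ omega0_ne_zero
  rw [nadd_le_iff]
  constructor
  · intro a' ha'
    have H := IHa a' ha' b (ha'.trans ha) hb
    have hdle : a' / W ≤ a / W := div_le_left ha'.le W
    rcases lt_or_eq_of_le hdle with hdlt | hdeq
    · have h1 : a' % W ♯ b % W < W := hW _ (mod_lt a' W0) _ (mod_lt b W0)
      have h2 : W * (a' / W + b / W) + (a' % W ♯ b % W) < W * (a' / W + b / W) + W :=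
        add_lt_add_right h1 _
      have h3 : W * (a' / W + b / W) + W = W * ((a' / W + b / W) + 1) := by
        rw [mul_add_one]
      have h4 : (a' / W + b / W) + 1 ≤ a / W + b / W := by
        obtain ⟨p', hp'⟩ := lt_omega0.1 ((div_lt W0).2 (ha'.trans ha))
        obtain ⟨p, hp⟩ := lt_omega0.1 ((div_lt W0).2 ha)
        obtain ⟨q, hq⟩ := lt_omega0.1 ((div_lt W0).2 hb)
        rw [hp', hp] at hdlt
        rw [hp', hp, hq]
        rw [← Nat.cast_add, ← Nat.cast_add, ← Nat.cast_one, ← Nat.cast_add, Nat.cast_le]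
        have := Nat.cast_lt.1 hdlt
        omega
      calc a' ♯ b ≤ W * (a' / W + b / W) + (a' % W ♯ b % W) := H
        _ < W * ((a' / W + b / W) + 1) := by rw [← h3]; exact h2
        _ ≤ W * (a / W + b / W) := mul_le_mul_right h4 _
        _ ≤ W * (a / W + b / W) + (a % W ♯ b % W) := le_self_add
    · have hmlt : a' % W < a % W := by
        have e1 : W * (a' / W) + a' % W = a' := div_add_mod a' W
        have e2 : W * (a / W) + a % W = a := div_add_mod a W
        rw [← e1, ← e2, hdeq] at ha'
        exact (add_lt_add_iff_left _).1 ha'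
      calc a' ♯ b ≤ W * (a' / W + b / W) + (a' % W ♯ b % W) := H
        _ = W * (a / W + b / W) + (a' % W ♯ b % W) := by rw [hdeq]
        _ < W * (a / W + b / W) + (a % W ♯ b % W) :=
            add_lt_add_right (nadd_lt_nadd_right hmlt _) _
  · intro b' hb'
    have H := IHb b' hb' ha (hb'.trans hb)
    have hdle : b' / W ≤ b / W := div_le_left hb'.le W
    rcases lt_or_eq_of_le hdle with hdlt | hdeq
    · have h1 : a % W ♯ b' % W < W := hW _ (mod_lt a W0) _ (mod_lt b' W0)
      have h4 : (a / W + b' / W) + 1 ≤ a / W + b / W := by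
        obtain ⟨p', hp'⟩ := lt_omega0.1 ((div_lt W0).2 (hb'.trans hb))
        obtain ⟨p, hp⟩ := lt_omega0.1 ((div_lt W0).2 ha)
        obtain ⟨q, hq⟩ := lt_omega0.1 ((div_lt W0).2 hb)
        rw [hp', hq] at hdlt
        rw [hp', hp, hq]
        rw [← Nat.cast_add, ← Nat.cast_add, ← Nat.cast_one, ← Nat.cast_add, Nat.cast_le]
        have := Nat.cast_lt.1 hdlt
        omega
      calc a ♯ b' ≤ W * (a / W + b' / W) + (a % W ♯ b' % W) := H
        _ < W * (a / W + b' / W) + W := add_lt_add_right h1 _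
        _ = W * ((a / W + b' / W) + 1) := by rw [mul_add_one]
        _ ≤ W * (a / W + b / W) := mul_le_mul_right h4 _
        _ ≤ W * (a / W + b / W) + (a % W ♯ b % W) := le_self_add
    · have hmlt : b' % W < b % W := by
        have e1 : W * (b' / W) + b' % W = b' := div_add_mod b' W
        have e2 : W * (b / W) + b % W = b := div_add_mod b W
        rw [← e1, ← e2, hdeq] at hb'
        exact (add_lt_add_iff_left _).1 hb'
      calc a ♯ b' ≤ W * (a / W + b' / W) + (a % W ♯ b' % W) := H
        _ = W * (a / W + b / W) + (a % W ♯ b' % W) := by rw [hdeq]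
        _ < W * (a / W + b / W) + (a % W ♯ b % W) :=
            add_lt_add_right (nadd_lt_nadd_left hmlt _) _

lemma nadd_principal : ∀ γ : Ordinal, 0 < γ → ∀ a < omega0 ^ γ, ∀ b < omega0 ^ γ, a ♯ b < omega0 ^ γ := by
  intro γ
  induction γ using Ordinal.induction with
  | h γ IH =>
  intro hγ a ha b hb
  rcases zero_or_succ_or_isSuccLimit γ with h0 | ⟨e, rfl⟩ | hlim
  · exact absurd h0 hγ.ne'
  · have hW : ∀ x < omega0 ^ e, ∀ y < omega0 ^ e, x ♯ y < omega0 ^ e := by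
      rcases eq_or_ne e 0 with rfl | he
      · intro x hx y hy
        rw [opow_zero, lt_one_iff_zero] at hx hy
        subst hx; subst hy
        rw [nadd_zero, opow_zero]
        exact zero_lt_one
      · exact IH e (lt_succ e) (pos_iff_ne_zero.2 he)
    have ha' : a < omega0 ^ e * omega0 := by rwa [← opow_succ]
    have hb' : b < omega0 ^ e * omega0 := by rwa [← opow_succ]
    have H := nadd_key e hW a b ha' hb'
    set W := omega0 ^ e with hWdef
    have W0 : W ≠ 0 := opow_ne_zero _ omega0_ne_zero
    have h1 : a % W ♯ b % W < W := hW _ (mod_lt a W0) _ (mod_lt b W0)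
    have h2 : a ♯ b < W * ((a / W + b / W) + 1) := by
      calc a ♯ b ≤ W * (a / W + b / W) + (a % W ♯ b % W) := H
        _ < W * (a / W + b / W) + W := add_lt_add_right h1 _
        _ = W * ((a / W + b / W) + 1) := by rw [mul_add_one]
    have h3 : (a / W + b / W) + 1 < omega0 := by
      obtain ⟨p, hp⟩ := lt_omega0.1 ((div_lt W0).2 ha')
      obtain ⟨q, hq⟩ := lt_omega0.1 ((div_lt W0).2 hb')
      rw [hp, hq, ← Nat.cast_add, ← Nat.cast_one, ← Nat.cast_add]
      exact nat_lt_omega0 _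
    calc a ♯ b < W * ((a / W + b / W) + 1) := h2
      _ < W * omega0 := mul_lt_mul_of_pos_left h3 (pos_iff_ne_zero.2 W0)
      _ = omega0 ^ succ e := (opow_succ _ _).symm
  · obtain ⟨e1, he1, ha1⟩ := (lt_opow_of_isSuccLimit omega0_ne_zero hlim).1 ha
    obtain ⟨e2, he2, hb1⟩ := (lt_opow_of_isSuccLimit omega0_ne_zero hlim).1 hb
    set e := max e1 e2 with hedef
    have hse : succ e < γ := hlim.succ_lt (max_lt he1 he2)
    have h1 : a < omega0 ^ succ e :=
      ha1.trans_le (opow_le_opow_right omega0_pos ((le_max_left _ _).trans (le_succ e)))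
    have h2 : b < omega0 ^ succ e :=
      hb1.trans_le (opow_le_opow_right omega0_pos ((le_max_right _ _).trans (le_succ e)))
    exact (IH _ hse (succ_pos e) a h1 b h2).trans_le
      (opow_le_opow_right omega0_pos hse.le)


/-- The order type (as an `Ordinal.{u+1}`) of a set of ordinals. -/
noncomputable def T (s : Set Ordinal.{u}) : Ordinal.{u+1} :=
  Ordinal.type (Subrel ((· < ·) : Ordinal.{u} → Ordinal.{u} → Prop) (· ∈ s))

lemma T_mono {s t : Set Ordinal.{u}} (h : s ⊆ t) : T s ≤ T t :=
  RelEmbedding.ordinal_type_le ⟨⟨Set.inclusion h, Set.inclusion_injective h⟩, Iff.rfl⟩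

lemma T_init {s : Set Ordinal.{u}} {x : Ordinal.{u}} (hx : x ∈ s) :
    T (s ∩ Set.Iio x) < T s := by
  refine PrincipalSeg.ordinal_type_lt ⟨⟨⟨Set.inclusion inter_subset_left,
    Set.inclusion_injective inter_subset_left⟩, Iff.rfl⟩, ⟨x, hx⟩, ?_⟩
  intro b
  constructor
  · rintro ⟨a, rfl⟩
    exact a.2.2
  · intro hb
    exact ⟨⟨b.1, b.2, hb⟩, rfl⟩

lemma T_Iio (o : Ordinal.{u}) : T (Set.Iio o) = Ordinal.lift.{u+1} o :=
  (type_subrel _ _).trans (typein_ordinal o)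

lemma T_bounded {s : Set Ordinal.{u}} {c : Ordinal.{u+1}} (f : s → Ordinal.{u+1})
    (hmono : StrictMono f) (hbd : ∀ x, f x < c) : T s ≤ c := by
  haveI iwo : IsWellOrder c.ToType (· < ·) := isWellOrder_lt
  have key : T s ≤ Ordinal.type ((· < ·) : c.ToType → c.ToType → Prop) := by
    refine RelEmbedding.ordinal_type_le ⟨⟨fun x => (ToType.mk (o := c)) ⟨f x, hbd x⟩, ?_⟩, ?_⟩
    · intro x y hxy
      have := ((ToType.mk (o := c))).injective hxy
      exact hmono.injective (Subtype.ext_iff.1 this)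
    · intro x y
      show (ToType.mk (o := c)) ⟨f x, hbd x⟩ < (ToType.mk (o := c)) ⟨f y, hbd y⟩ ↔ Subrel _ _ x y
      rw [OrderIso.lt_iff_lt]
      exact (Subtype.mk_lt_mk.trans hmono.lt_iff_lt).trans Subtype.coe_lt_coe.symm
  exact key.trans_eq (type_toType c)

lemma T_union (A B : Set Ordinal.{u}) : T (A ∪ B) ≤ T A ♯ T B := by
  refine T_bounded (fun x => T (A ∩ Set.Iio x.1) ♯ T (B ∩ Set.Iio x.1)) ?_ ?_
  · intro x y hxy
    have hxy' : (x : Ordinal) < y := Subtype.coe_lt_coe.2 hxy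
    have hAsub : A ∩ Set.Iio x.1 ⊆ A ∩ Set.Iio y.1 :=
      inter_subset_inter_right _ (Iio_subset_Iio hxy'.le)
    have hBsub : B ∩ Set.Iio x.1 ⊆ B ∩ Set.Iio y.1 :=
      inter_subset_inter_right _ (Iio_subset_Iio hxy'.le)
    rcases x.2 with hxA | hxB
    · have key : T (A ∩ Set.Iio x.1) < T (A ∩ Set.Iio y.1) := by
        have heq : A ∩ Set.Iio x.1 = (A ∩ Set.Iio y.1) ∩ Set.Iio x.1 := by
          ext z
          simp only [Set.mem_inter_iff, Set.mem_Iio]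
          constructor
          · rintro ⟨h1, h2⟩; exact ⟨⟨h1, h2.trans hxy'⟩, h2⟩
          · rintro ⟨⟨h1, _⟩, h2⟩; exact ⟨h1, h2⟩
        rw [heq]
        exact T_init ⟨hxA, hxy'⟩
      exact nadd_lt_nadd_of_lt_of_le key (T_mono hBsub)
    · have key : T (B ∩ Set.Iio x.1) < T (B ∩ Set.Iio y.1) := by
        have heq : B ∩ Set.Iio x.1 = (B ∩ Set.Iio y.1) ∩ Set.Iio x.1 := by
          ext z
          simp only [Set.mem_inter_iff, Set.mem_Iio]
          constructor
          · rintro ⟨h1, h2⟩; exact ⟨⟨h1, h2.trans hxy'⟩, h2⟩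
          · rintro ⟨⟨h1, _⟩, h2⟩; exact ⟨h1, h2⟩
        rw [heq]
        exact T_init ⟨hxB, hxy'⟩
      exact nadd_lt_nadd_of_le_of_lt (T_mono hAsub) key
  · intro x
    rcases x.2 with hxA | hxB
    · exact nadd_lt_nadd_of_lt_of_le (T_init hxA) (T_mono inter_subset_left)
    · exact nadd_lt_nadd_of_le_of_lt (T_mono inter_subset_left) (T_init hxB)

lemma exists_orderIso (s : Set Ordinal.{u}) {t : Ordinal.{u}}
    (h : Ordinal.lift.{u+1} t = T s) : Nonempty (s ≃o Set.Iio t) := by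
  -- iso from {o // o < T s} to s
  have e1 := Ordinal.enum (Subrel ((· < ·) : Ordinal.{u} → Ordinal.{u} → Prop) (· ∈ s))
  -- iso from Iio t to {o : Ordinal.{u+1} // o < T s}
  have hsurj : Function.Surjective
      (fun x : Set.Iio t => (⟨Ordinal.lift.{u+1} x.1, by
        rw [← h, Ordinal.lift_lt]; exact x.2⟩ : {o : Ordinal.{u+1} // o < T s})) := by
    rintro ⟨o, ho⟩
    rw [← h] at ho
    obtain ⟨o', rfl⟩ := Ordinal.mem_range_lift_of_le ho.le
    exact ⟨⟨o', Ordinal.lift_lt.1 ho⟩, rfl⟩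
  have hsm : StrictMono
      (fun x : Set.Iio t => (⟨Ordinal.lift.{u+1} x.1, by
        rw [← h, Ordinal.lift_lt]; exact x.2⟩ : {o : Ordinal.{u+1} // o < T s})) := by
    intro x y hxy
    exact Subtype.mk_lt_mk.2 (Ordinal.lift_lt.2 (Subtype.coe_lt_coe.2 hxy))
  have e2 := StrictMono.orderIsoOfSurjective _ hsm hsurj
  -- iso from {o // o < T s} to s as OrderIso
  have e3 : {o : Ordinal.{u+1} // o < T s} ≃o s := by
    refine OrderIso.ofRelIsoLT (RelIso.mk e1.toEquiv ?_)
    intro a b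
    rw [← Subtype.coe_lt_coe, ← Subtype.coe_lt_coe]
    exact e1.map_rel_iff
  exact ⟨(e2.trans e3).symm⟩

/-- The order type of a set in a linear order: the (unique, when it exists)
ordinal `o` such that the set is order-isomorphic to `Set.Iio o`. -/
noncomputable def otypeOf {X : Type*} [LinearOrder X] (s : Set X) : Ordinal :=
  sInf {o : Ordinal | Nonempty (s ≃o Set.Iio o)}

lemma Iio_orderIso_inj {o t : Ordinal.{u}} (h : Nonempty ((Set.Iio o) ≃o (Set.Iio t))) :
    o = t := by
  obtain ⟨g⟩ := h
  have hT : T (Set.Iio o) = T (Set.Iio t) :=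
    RelIso.ordinal_type_eq (RelIso.mk g.toEquiv (fun {a b} => by
      show ((g a : Ordinal) < (g b : Ordinal)) ↔ ((a : Ordinal) < (b : Ordinal))
      rw [Subtype.coe_lt_coe, Subtype.coe_lt_coe, g.lt_iff_lt]))
  rw [T_Iio, T_Iio] at hT
  exact Ordinal.lift_inj.1 hT

lemma otypeOf_eq {s : Set Ordinal.{u}} {t : Ordinal.{u}} (h : Nonempty (s ≃o Set.Iio t)) :
    otypeOf s = t := by
  have hset : {o : Ordinal.{u} | Nonempty (s ≃o Set.Iio o)} = {t} := by
    ext o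
    simp only [Set.mem_setOf_eq, Set.mem_singleton_iff]
    constructor
    · rintro ⟨g⟩
      obtain ⟨g'⟩ := h
      exact Iio_orderIso_inj ⟨g.symm.trans g'⟩
    · rintro rfl
      exact h
  rw [otypeOf, hset, csInf_singleton]

lemma stmt4_aux (α δ : Ordinal.{u}) (hl : Order.IsSuccLimit α)
    (hδ : 0 < δ) (hα : α = omega0 ^ δ) :
    ∀ A : Set Ordinal.{u}, A ⊆ Set.Iio α →
      otypeOf A = α ∨ otypeOf (Set.Iio α \ A) = α := by
  intro A hA
  set B := Set.Iio α \ A with hBdef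
  have hBsub : B ⊆ Set.Iio α := diff_subset
  have hABeq : A ∪ B = Set.Iio α := Set.union_diff_cancel hA
  have hTA : T A ≤ Ordinal.lift.{u+1} α := by
    rw [← T_Iio α]; exact T_mono hA
  have hTB : T B ≤ Ordinal.lift.{u+1} α := by
    rw [← T_Iio α]; exact T_mono hBsub
  obtain ⟨tA, htA⟩ := Ordinal.mem_range_lift_of_le hTA
  obtain ⟨tB, htB⟩ := Ordinal.mem_range_lift_of_le hTB
  have hoA : otypeOf A = tA := otypeOf_eq (exists_orderIso A htA)
  have hoB : otypeOf B = tB := otypeOf_eq (exists_orderIso B htB)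
  have htAle : tA ≤ α := by
    rw [← Ordinal.lift_le]; rw [htA]; exact hTA
  have htBle : tB ≤ α := by
    rw [← Ordinal.lift_le]; rw [htB]; exact hTB
  rw [hoA, hoB]
  by_contra hcon
  push_neg at hcon
  obtain ⟨h1, h2⟩ := hcon
  have key : Ordinal.lift.{u+1} α ≤ Ordinal.lift.{u+1} tA ♯ Ordinal.lift.{u+1} tB := by
    calc Ordinal.lift.{u+1} α = T (Set.Iio α) := (T_Iio α).symm
      _ = T (A ∪ B) := by rw [hABeq]
      _ ≤ T A ♯ T B := T_union A B
      _ = Ordinal.lift.{u+1} tA ♯ Ordinal.lift.{u+1} tB := by rw [htA, htB]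
  have hp : Ordinal.IsPrincipal (· + ·) α := by
    rw [hα]; exact isPrincipal_add_omega0_opow δ
  have hpl : Ordinal.IsPrincipal (· + ·) (Ordinal.lift.{u+1} α) := by
    rw [isPrincipal_add_iff_add_left_eq_self] at hp ⊢
    intro a ha
    obtain ⟨a', rfl⟩ := Ordinal.mem_range_lift_of_le ha.le
    rw [← lift_add, hp a' (Ordinal.lift_lt.1 ha)]
  have hlimlift : Order.IsSuccLimit (Ordinal.lift.{u+1} α) := isSuccLimit_lift.2 hl
  rcases isPrincipal_add_iff_zero_or_omega0_opow.1 hpl with h0 | ⟨δ', hδ'⟩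
  · rw [h0] at hlimlift
    exact hlimlift.pos.false
  · have hδ'' : omega0 ^ δ' = Ordinal.lift.{u+1} α := hδ'
    have hδ'pos : 0 < δ' := by
      rcases eq_zero_or_pos δ' with rfl | hpos
      · rw [← hδ'', opow_zero] at hlimlift
        exact absurd (one_lt_of_isSuccLimit hlimlift) (lt_irrefl 1)
      · exact hpos
    have finA : Ordinal.lift.{u+1} tA < omega0 ^ δ' := by
      rw [hδ'']; exact Ordinal.lift_lt.2 (lt_of_le_of_ne htAle h1)
    have finB : Ordinal.lift.{u+1} tB < omega0 ^ δ' := by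
      rw [hδ'']; exact Ordinal.lift_lt.2 (lt_of_le_of_ne htBle h2)
    have final := nadd_principal δ' hδ'pos _ finA _ finB
    rw [hδ''] at final
    exact (key.trans_lt final).false


/-- For an indecomposable countable limit ordinal α (i.e. α = ω^δ, δ > 0) and any
A ⊆ α, either A or its complement α ∖ A has order type α. -/
theorem stmt4 (α δ : Ordinal) (hc : α.card ≤ Cardinal.aleph0) (hl : Order.IsSuccLimit α)
    (hδ : 0 < δ) (hα : α = omega0 ^ δ) :
    ∀ A : Set Ordinal, A ⊆ Set.Iio α →
      otypeOf A = α ∨ otypeOf (Set.Iio α \ A) = α :=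
  stmt4_aux α δ hl hδ hα
end

section
/- For a limit ordinal γ and k ≥ 1, every A ∈ 𝒫(γ + k) has the form C ∪ {γ, γ+1, …, γ+k−1} for some C ∈ 𝒫(γ); that is, every copy of γ + k inside γ + k contains all the points γ, γ+1, …, γ+k−1. -/
open Ordinal Set

/-- The set of subsets of `α` (i.e. of `Set.Iio α`) order-isomorphic to `α`. -/
noncomputable def Copies (α : Ordinal) : Set (Set Ordinal) :=
  {A | A ⊆ Set.Iio α ∧ otypeOf A = α}

universe u

lemma Iio_iso_inj {o₁ o₂ : Ordinal.{u}} (e : (Set.Iio o₁ : Set Ordinal.{u}) ≃o Set.Iio o₂) :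
    o₁ = o₂ := by
  let e2 : o₁.ToType ≃o o₂.ToType :=
    (Ordinal.ToType.mk (o := o₁)).symm.trans (e.trans (Ordinal.ToType.mk (o := o₂)))
  have h3 : ((· < ·) : o₁.ToType → o₁.ToType → Prop) ≃r ((· < ·) : o₂.ToType → o₂.ToType → Prop) :=
    ⟨e2.toEquiv, by simp [e2.lt_iff_lt]⟩
  have h4 := @RelIso.ordinal_type_eq _ _ _ _ isWellOrder_lt isWellOrder_lt h3
  rwa [@type_toType o₁, @type_toType o₂] at h4

lemma otypeOf_eq_of_iso {s : Set Ordinal.{u}} {o : Ordinal.{u}} (e : s ≃o Set.Iio o) :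
    otypeOf s = o := by
  have hset : {o' : Ordinal | Nonempty (s ≃o Set.Iio o')} = {o} := by
    ext o'
    constructor
    · rintro ⟨e'⟩
      exact (Iio_iso_inj (e.symm.trans e')).symm
    · rintro rfl
      exact ⟨e⟩
  rw [otypeOf, hset, csInf_singleton]

lemma le_self_of_strictMono {o : Ordinal} (g : Set.Iio o → Ordinal) (hg : StrictMono g) :
    ∀ β : Set.Iio o, (β : Ordinal) ≤ g β := by
  suffices h : ∀ b : Ordinal, ∀ hb : b < o, b ≤ g ⟨b, hb⟩ by
    intro β; exact h β.1 β.2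
  intro b
  induction b using Ordinal.induction with
  | h b IH =>
    intro hb
    by_contra hlt
    push_neg at hlt
    have h2 : g ⟨g ⟨b, hb⟩, hlt.trans hb⟩ < g ⟨b, hb⟩ := hg hlt
    exact absurd (IH _ hlt (hlt.trans hb)) (not_le.2 h2)

/-- For a limit ordinal γ and k ≥ 1, every A ∈ 𝒫(γ+k) has the form
C ∪ {γ, …, γ+k−1} with C ∈ 𝒫(γ); in particular every copy of γ+k inside γ+k
contains all the points γ, γ+1, …, γ+k−1. -/
theorem stmt8 (γ : Ordinal) (hl : Order.IsSuccLimit γ) (k : ℕ) (hk : 1 ≤ k) :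
    (∀ A ∈ Copies (γ + k), ∃ C ∈ Copies γ,
        A = C ∪ {x : Ordinal | γ ≤ x ∧ x < γ + k}) ∧
    (∀ A ∈ Copies (γ + k), ∀ i : ℕ, i < k → γ + i ∈ A) := by
  have hγk : γ < γ + k := by
    have : (0 : Ordinal) < k := by exact_mod_cast hk
    simpa using (add_lt_add_iff_left γ).2 this
  have hcomb : ∀ i : ℕ, i < k → γ + (i : Ordinal) < γ + k := by
    intro i h
    exact (add_lt_add_iff_left γ).2 (by exact_mod_cast h)
  -- main work
  have main : ∀ A ∈ Copies (γ + k),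
      (∀ i : ℕ, i < k → γ + i ∈ A) ∧
      ∃ C ∈ Copies γ, A = C ∪ {x : Ordinal | γ ≤ x ∧ x < γ + k} := by
    rintro A ⟨hsub, hot⟩
    -- get the order isomorphism
    have hS : {o : Ordinal | Nonempty (A ≃o Set.Iio o)}.Nonempty := by
      by_contra h
      rw [not_nonempty_iff_eq_empty] at h
      rw [otypeOf, h, show sInf (∅ : Set Ordinal) = 0 by simp] at hot
      have h0 : (0 : Ordinal) < γ + k := hl.pos.trans hγk
      rw [← hot] at h0
      simp at h0
    have hmem := csInf_mem hS
    rw [otypeOf] at hot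
    rw [hot] at hmem
    obtain ⟨e⟩ := hmem
    set f := e.symm with hf
    set g : Set.Iio (γ + (k : Ordinal)) → Ordinal := fun β => (f β : Ordinal) with hgdef
    have hg : StrictMono g := by
      intro a b h
      exact Subtype.coe_lt_coe.2 (f.strictMono h)
    have hle := le_self_of_strictMono g hg
    have hltk : ∀ β, g β < γ + k := fun β => hsub (f β).2
    have hmemA : ∀ β, g β ∈ A := fun β => (f β).2
    -- fixed points
    have key : ∀ d : ℕ, ∀ i : ℕ, ∀ h : i + d + 1 = k,
        g ⟨γ + i, hcomb i (by omega)⟩ = γ + i := by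
      intro d
      induction d with
      | zero =>
        intro i h
        refine le_antisymm ?_ (hle ⟨γ + i, hcomb i (by omega)⟩)
        have h2 := hltk ⟨γ + i, hcomb i (by omega)⟩
        have hk' : γ + (k : Ordinal) = (γ + i) + 1 := by
          rw [← h]; push_cast; simp [add_assoc]
        have h2' := lt_of_lt_of_le h2 hk'.le
        exact Order.lt_add_one_iff.1 h2'
      | succ d IH =>
        intro i h
        have hnext := IH (i + 1) (by omega)
        refine le_antisymm ?_ (hle ⟨γ + i, hcomb i (by omega)⟩)
        have hlt2 : g ⟨γ + i, hcomb i (by omega)⟩ < g ⟨γ + (i + 1 : ℕ), hcomb (i + 1) (by omega)⟩ := by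
          apply hg
          show (γ + (i : Ordinal)) < γ + ((i + 1 : ℕ) : Ordinal)
          exact (add_lt_add_iff_left γ).2 (by exact_mod_cast Nat.lt_succ_self i)
        have heq : g ⟨γ + (i + 1 : ℕ), hcomb (i + 1) (by omega)⟩ = (γ + i) + 1 := by
          rw [hnext]; push_cast; rw [add_assoc]
        have hlt3 := lt_of_lt_of_le hlt2 heq.le
        exact Order.lt_add_one_iff.1 hlt3
    have hfix : ∀ i : ℕ, ∀ h : i < k, g ⟨γ + i, hcomb i h⟩ = γ + i := by
      intro i h
      exact key (k - 1 - i) i (by omega)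
    have hmem2 : ∀ i : ℕ, i < k → γ + i ∈ A := by
      intro i h
      rw [← hfix i h]
      exact hmemA _
    refine ⟨hmem2, ?_⟩
    -- the copy of γ
    have hγlt : γ < γ + k := hγk
    have hfγ : g ⟨γ, hγlt⟩ = γ := by
      have := hfix 0 (by omega)
      simpa using this
    set C : Set Ordinal := A ∩ Set.Iio γ with hC
    -- construct iso Iio γ ≃o C
    have hmk : ∀ β : Set.Iio γ, g ⟨(β : Ordinal), β.2.trans hγlt⟩ ∈ C := by
      intro β
      refine ⟨hmemA _, ?_⟩
      have : g ⟨(β : Ordinal), β.2.trans hγlt⟩ < g ⟨γ, hγlt⟩ := hg β.2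
      rwa [hfγ] at this
    set G : Set.Iio γ → C := fun β => ⟨g ⟨(β : Ordinal), β.2.trans hγlt⟩, hmk β⟩ with hGdef
    have hGmono : StrictMono G := by
      intro a b h
      exact Subtype.mk_lt_mk.2 (hg h)
    have hGsurj : Function.Surjective G := by
      rintro ⟨x, hxA, hxγ⟩
      set β := e ⟨x, hxA⟩ with hβ
      have hgβ : g β = x := by
        simp [hgdef, hf, hβ]
      have hβγ : (β : Ordinal) < γ := by
        by_contra hle'
        push_neg at hle'
        have : g ⟨γ, hγlt⟩ ≤ g β := by
          rcases eq_or_lt_of_le hle' with h' | h'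
          · have : (⟨γ, hγlt⟩ : Set.Iio (γ + (k:Ordinal))) = β := Subtype.ext h'
            rw [this]
          · exact le_of_lt (hg h')
        rw [hfγ, hgβ] at this
        exact absurd hxγ (not_lt.2 this)
      refine ⟨⟨(β : Ordinal), hβγ⟩, ?_⟩
      apply Subtype.ext
      show g ⟨(β : Ordinal), _⟩ = x
      rw [← hgβ]
    let isoG : Set.Iio γ ≃o C := StrictMono.orderIsoOfSurjective G hGmono hGsurj
    have hCot : otypeOf C = γ := otypeOf_eq_of_iso isoG.symm
    refine ⟨C, ⟨fun x hx => hx.2, hCot⟩, ?_⟩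
    ext x
    constructor
    · intro hx
      by_cases hxγ : x < γ
      · exact Or.inl ⟨hx, hxγ⟩
      · exact Or.inr ⟨not_lt.1 hxγ, hsub hx⟩
    · rintro (hx | ⟨h1, h2⟩)
      · exact hx.1
      · -- x = γ + i for some i < k
        have hsub' : x - γ < (k : Ordinal) := Ordinal.sub_lt_of_lt_add h2 (by exact_mod_cast hk)
        have hω : x - γ < Ordinal.omega0 := hsub'.trans (Ordinal.nat_lt_omega0 k)
        obtain ⟨n, hn⟩ := Ordinal.lt_omega0.1 hω
        have hnk : n < k := by exact_mod_cast hn ▸ hsub'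
        have hx' : x = γ + n := by rw [← hn, Ordinal.add_sub_cancel_of_le h1]
        rw [hx']
        exact hmem2 n hnk
  exact ⟨fun A hA => (main A hA).2, fun A hA => (main A hA).1⟩
end

section
/- Let β ≥ 1 and identify ω^{β+1} with L = ω × ω^β ordered lexicographically, with columns L_i = {i} × ω^β. Then a subset A ⊆ L contains a copy of L if and only if for every j ∈ ω there exists i ≥ j such that ω^β embeds into A ∩ L_i. Equivalently, I_L = Fin × I_{ω^β}, the Fubini product of the Fréchet ideal with I_{ω^β}. -/
open Ordinal Set

section Aux

variable {β : Ordinal}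

private lemma aux_fst_mono {z w : ℕ ×ₗ (Set.Iio (omega0 ^ β))} (h : z ≤ w) :
    (ofLex z).1 ≤ (ofLex w).1 := by
  rcases (Prod.Lex.le_iff (x := toLex (ofLex z)) (y := toLex (ofLex w))).1 h with h' | h'
  · exact h'.le
  · exact h'.1.le

private lemma aux_snd_lt {z w : ℕ ×ₗ (Set.Iio (omega0 ^ β))} (h : z < w)
    (hfst : (ofLex z).1 = (ofLex w).1) : (ofLex z).2 < (ofLex w).2 := by
  rcases (Prod.Lex.lt_iff (x := toLex (ofLex z)) (y := toLex (ofLex w))).1 h with h' | h'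
  · exact absurd hfst h'.ne
  · exact h'.2

/-- Forward direction: an embedding of the whole lex product into `A` yields, beyond
any `j`, a column into which `ω^β` embeds. -/
private lemma aux_forward (β : Ordinal) (A : Set (ℕ ×ₗ (Set.Iio (omega0 ^ β))))
    (f : (ℕ ×ₗ (Set.Iio (omega0 ^ β))) ↪o A) (j : ℕ) :
    ∃ i ≥ j, Nonempty ((Set.Iio (omega0 ^ β)) ↪o
      {y : Set.Iio (omega0 ^ β) | toLex (i, y) ∈ A}) := by
  have hy0 : (0 : Ordinal) ∈ (Set.Iio (omega0 ^ β)) := Ordinal.opow_pos β omega0_pos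
  set y₀ : (Set.Iio (omega0 ^ β)) := ⟨0, hy0⟩ with hy₀def
  have hy₀bot : ∀ y : (Set.Iio (omega0 ^ β)), y₀ ≤ y := fun y => Subtype.mk_le_mk.2 zero_le
  set F : ℕ ×ₗ (Set.Iio (omega0 ^ β)) → ℕ ×ₗ (Set.Iio (omega0 ^ β)) := fun z => ((f z : A) : ℕ ×ₗ (Set.Iio (omega0 ^ β))) with hFdef
  have hF : StrictMono F := fun a b h => Subtype.coe_lt_coe.2 (f.strictMono h)
  have hFA : ∀ z, F z ∈ A := fun z => (f z).2
  set c : ℕ → ℕ := fun n => (ofLex (F (toLex (n, y₀)))).1 with hcdef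
  have hc_lb : ∀ n (y : (Set.Iio (omega0 ^ β))), c n ≤ (ofLex (F (toLex (n, y)))).1 := by
    intro n y
    refine aux_fst_mono (hF.monotone ?_)
    exact (Prod.Lex.le_iff (x := toLex (n, y₀)) (y := toLex (n, y))).2 (Or.inr ⟨rfl, hy₀bot y⟩)
  have hc_ub : ∀ n (y : (Set.Iio (omega0 ^ β))), (ofLex (F (toLex (n, y)))).1 ≤ c (n + 1) := by
    intro n y
    refine aux_fst_mono (hF ?_).le
    exact (Prod.Lex.lt_iff (x := toLex (n, y)) (y := toLex (n + 1, y₀))).2 (Or.inl (Nat.lt_succ_self n))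
  by_cases hb : ∀ j' : ℕ, ∃ n, j' ≤ c n
  · -- unbounded case
    obtain ⟨n, hn⟩ := hb j
    set h : (Set.Iio (omega0 ^ β)) → ℕ := fun y => (ofLex (F (toLex (n, y)))).1 with hhdef
    have hmono : Monotone h := by
      intro y z hyz
      exact aux_fst_mono (hF.monotone ((Prod.Lex.le_iff (x := toLex (n, y)) (y := toLex (n, z))).2 (Or.inr ⟨rfl, hyz⟩)))
    have hbdd : BddAbove (Set.range h) := ⟨c (n + 1), by rintro _ ⟨y, rfl⟩; exact hc_ub n y⟩
    have hne : (Set.range h).Nonempty := ⟨h y₀, ⟨y₀, rfl⟩⟩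
    obtain ⟨yₘ, hyₘ⟩ := Nat.sSup_mem hne hbdd
    set m : ℕ := sSup (Set.range h) with hmdef
    have hle : ∀ y, h y ≤ m := fun y => le_csSup hbdd ⟨y, rfl⟩
    have hjm : j ≤ m := le_trans (le_trans hn (le_of_eq rfl)) (hle y₀)
    set shift : (Set.Iio (omega0 ^ β)) → (Set.Iio (omega0 ^ β)) := fun y =>
      ⟨yₘ.1 + y.1, principal_add_omega0_opow β yₘ.2 y.2⟩ with hshiftdef
    have hshift_ge : ∀ y, yₘ ≤ shift y := fun y =>
      Subtype.mk_le_mk.2 (le_self_add)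
    have hshift_mono : StrictMono shift := by
      intro y z hyz
      exact Subtype.mk_lt_mk.2 ((add_lt_add_iff_left _).2 (Subtype.coe_lt_coe.2 hyz))
    have hconst : ∀ y, h (shift y) = m :=
      fun y => le_antisymm (hle _) (hyₘ ▸ hmono (hshift_ge y))
    have hkey : ∀ y, toLex ((m : ℕ), (ofLex (F (toLex (n, shift y)))).2) ∈ A := by
      intro y
      have h1 : toLex ((m : ℕ), (ofLex (F (toLex (n, shift y)))).2)
          = F (toLex (n, shift y)) := by
        rw [← hconst y]
        exact (congrArg toLex (Prod.mk.eta)).trans (toLex_ofLex _)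
      rw [h1]; exact hFA _
    refine ⟨m, hjm, ⟨OrderEmbedding.ofStrictMono
      (fun y => ⟨(ofLex (F (toLex (n, shift y)))).2, hkey y⟩) ?_⟩⟩
    intro y z hyz
    refine Subtype.mk_lt_mk.2 (aux_snd_lt
      (hF ((Prod.Lex.lt_iff (x := toLex (n, shift y)) (y := toLex (n, shift z))).2
        (Or.inr ⟨rfl, hshift_mono hyz⟩))) ?_)
    exact (hconst y).trans (hconst z).symm
  · -- bounded case: contradiction
    exfalso
    push_neg at hb
    obtain ⟨j', hj'⟩ := hb
    have hcmono : Monotone c := monotone_nat_of_le_succ fun n => hc_ub n y₀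
    have hbdd : BddAbove (Set.range c) := ⟨j', by rintro _ ⟨n, rfl⟩; exact (hj' n).le⟩
    obtain ⟨n₀, hn₀⟩ := Nat.sSup_mem (⟨c 0, ⟨0, rfl⟩⟩ : (Set.range c).Nonempty) hbdd
    set m : ℕ := sSup (Set.range c) with hmdef
    have hle : ∀ n, c n ≤ m := fun n => le_csSup hbdd ⟨n, rfl⟩
    have hconst : ∀ y, (ofLex (F (toLex (n₀, y)))).1 = m := by
      intro y
      refine le_antisymm ((hc_ub n₀ y).trans (hle _)) ?_
      exact hn₀ ▸ hc_lb n₀ y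
    have hcsucc : c (n₀ + 1) = m :=
      le_antisymm (hle _) (hn₀ ▸ hcmono (Nat.le_succ n₀))
    set e : (Set.Iio (omega0 ^ β)) → (Set.Iio (omega0 ^ β)) := fun y => (ofLex (F (toLex (n₀, y)))).2 with hedef
    set b : (Set.Iio (omega0 ^ β)) := (ofLex (F (toLex (n₀ + 1, y₀)))).2 with hbdef
    have he : ∀ y, e y < b := by
      intro y
      refine aux_snd_lt (hF ((Prod.Lex.lt_iff (x := toLex (n₀, y)) (y := toLex (n₀ + 1, y₀))).2
        (Or.inl (Nat.lt_succ_self n₀)))) ?_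
      exact (hconst y).trans hcsucc.symm
    have hemono : StrictMono e := by
      intro y z hyz
      exact aux_snd_lt (hF ((Prod.Lex.lt_iff (x := toLex (n₀, y)) (y := toLex (n₀, z))).2 (Or.inr ⟨rfl, hyz⟩)))
        ((hconst y).trans (hconst z).symm)
    haveI : WellFoundedLT (Set.Iio (omega0 ^ β)) := (OrderEmbedding.subtype _).wellFoundedLT
    exact absurd (hemono.le_apply (x := b)) (not_le_of_gt (he b))

/-- Backward direction: infinitely many good columns give an embedding of the whole
lex product. -/
private lemma aux_backward (β : Ordinal) (A : Set (ℕ ×ₗ (Set.Iio (omega0 ^ β))))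
    (hA : ∀ j : ℕ, ∃ i ≥ j, Nonempty ((Set.Iio (omega0 ^ β)) ↪o
      {y : Set.Iio (omega0 ^ β) | toLex (i, y) ∈ A})) :
    Nonempty ((ℕ ×ₗ (Set.Iio (omega0 ^ β))) ↪o A) := by
  choose idx hidx hgood using hA
  set g : ℕ → ℕ := fun n => Nat.rec (idx 0) (fun _ prev => idx (prev + 1)) n with hgdef
  have hg0 : g 0 = idx 0 := rfl
  have hgs : ∀ n, g (n + 1) = idx (g n + 1) := fun n => rfl
  have hgmono : StrictMono g := by
    refine strictMono_nat_of_lt_succ fun n => ?_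
    rw [hgs n]
    exact Nat.lt_of_succ_le (hidx (g n + 1))
  have hgn : ∀ n, Nonempty ((Set.Iio (omega0 ^ β)) ↪o {y : (Set.Iio (omega0 ^ β)) | toLex (g n, y) ∈ A}) := by
    intro n
    cases n with
    | zero => exact hgood 0
    | succ k => exact hgood (g k + 1)
  set E : ∀ n, (Set.Iio (omega0 ^ β)) ↪o {y : (Set.Iio (omega0 ^ β)) | toLex (g n, y) ∈ A} := fun n => (hgn n).some with hEdef
  have hmem : ∀ (n : ℕ) (y : (Set.Iio (omega0 ^ β))), toLex (g n, ((E n) y : (Set.Iio (omega0 ^ β)))) ∈ A := fun n y => (E n y).2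
  refine ⟨OrderEmbedding.ofStrictMono
    (fun p => ⟨toLex (g (ofLex p).1, ((E (ofLex p).1) (ofLex p).2 : (Set.Iio (omega0 ^ β)))),
      hmem (ofLex p).1 (ofLex p).2⟩) ?_⟩
  intro p q hpq
  obtain ⟨a, b⟩ := p
  obtain ⟨c, d⟩ := q
  refine Subtype.mk_lt_mk.2 ?_
  rcases (Prod.Lex.lt_iff (x := toLex (a, b)) (y := toLex (c, d))).1 hpq with h' | h'
  · exact Prod.Lex.lt_iff.2 (Or.inl (hgmono h'))
  · obtain ⟨rfl, hlt⟩ := h'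
    exact Prod.Lex.lt_iff.2
      (Or.inr ⟨rfl, Subtype.coe_lt_coe.2 ((E a).strictMono hlt)⟩)

end Aux

/-- Let β ≥ 1 and identify ω^{β+1} with L = ω × ω^β ordered lexicographically, with
columns L_i = {i} × ω^β. Then A ⊆ L contains a copy of L iff for every j there is
i ≥ j with ω^β embedding into A ∩ L_i; equivalently, I_L is the Fubini product
Fin × I_{ω^β}. -/
theorem stmt12 (β : Ordinal) (hβ : 1 ≤ β) :
    ∀ A : Set (ℕ ×ₗ (Set.Iio (omega0 ^ β))),
      (Nonempty ((ℕ ×ₗ (Set.Iio (omega0 ^ β))) ↪o A) ↔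
        ∀ j : ℕ, ∃ i ≥ j, Nonempty ((Set.Iio (omega0 ^ β)) ↪o
          {y : Set.Iio (omega0 ^ β) | toLex (i, y) ∈ A})) ∧
      (¬ Nonempty ((ℕ ×ₗ (Set.Iio (omega0 ^ β))) ↪o A) ↔
        {i : ℕ | Nonempty ((Set.Iio (omega0 ^ β)) ↪o
          {y : Set.Iio (omega0 ^ β) | toLex (i, y) ∈ A})}.Finite) := by
  intro A
  have key : Nonempty ((ℕ ×ₗ (Set.Iio (omega0 ^ β))) ↪o A) ↔
      ∀ j : ℕ, ∃ i ≥ j, Nonempty ((Set.Iio (omega0 ^ β)) ↪o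
        {y : Set.Iio (omega0 ^ β) | toLex (i, y) ∈ A}) := by
    constructor
    · rintro ⟨f⟩ j
      exact aux_forward β A f j
    · exact aux_backward β A
  refine ⟨key, ?_⟩
  rw [key]
  set S : Set ℕ := {i : ℕ | Nonempty ((Set.Iio (omega0 ^ β)) ↪o
    {y : Set.Iio (omega0 ^ β) | toLex (i, y) ∈ A})} with hSdef
  constructor
  · intro hP
    by_contra hinf
    apply hP
    intro j
    have hinf' : S.Infinite := hinf
    have h1 : ¬ ∀ i ∈ S, i < j := fun h => hinf' ((Set.finite_Iio j).subset h)
    push_neg at h1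
    obtain ⟨i, hiS, hij⟩ := h1
    exact ⟨i, hij, hiS⟩
  · intro hfin hP
    obtain ⟨k, hk⟩ := hfin.bddAbove
    obtain ⟨i, hik, hiS⟩ := hP (k + 1)
    have := hk hiS
    omega
end

section
/- For every β ≥ 1, the ideal I_{ω^{β+1}} on ω^{β+1} is isomorphic (via a bijection of underlying sets) to the Fubini product Fin × I_{ω^β} on ω × ω^β. -/
open Ordinal Set

/-- The Fubini product of the Fréchet ideal `Fin` on ω with an ideal `J` on `Y`:
sets all but finitely many of whose vertical sections lie in `J`. -/
def fub {Y : Type*} (J : Set (Set Y)) : Set (Set (ℕ × Y)) :=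
  {A | {i : ℕ | {y : Y | (i, y) ∈ A} ∉ J}.Finite}

/-- The ideal `I_α` of subsets of `α` into which `α` does not embed. -/
def ordIdeal (α : Ordinal) : Set (Set (Set.Iio α)) :=
  {A | ¬ Nonempty ((Set.Iio α) ↪o A)}

universe u
instance (δ : Ordinal.{u}) : IsWellOrder δ.ToType (· < ·) := isWellOrder_lt

theorem type_Iio (δ : Ordinal.{u}) :
    type ((· < ·) : Iio δ → Iio δ → Prop) = lift.{u+1} δ := by
  have f : ((· < ·) : Iio δ → Iio δ → Prop) ≃r ((· < ·) : δ.ToType → δ.ToType → Prop) :=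
    ⟨(ToType.mk (o := δ)).toEquiv, by simp⟩
  have h : lift.{u} (type ((· < ·) : Iio δ → Iio δ → Prop))
      = lift.{u+1} (type ((· < ·) : δ.ToType → δ.ToType → Prop)) :=
    f.ordinal_lift_type_eq
  rw [@type_toType δ] at h
  rwa [lift_id'.{u, u+1}] at h


theorem emb_iff {X Y : Type v} [LinearOrder X] [LinearOrder Y] [WellFoundedLT X]
    [WellFoundedLT Y] :
    Nonempty (X ↪o Y) ↔ type ((· < ·) : X → X → Prop) ≤ type ((· < ·) : Y → Y → Prop) := by
  rw [type_le_iff']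
  constructor
  · rintro ⟨f⟩; exact ⟨f.ltEmbedding⟩
  · rintro ⟨f⟩; exact ⟨f.orderEmbeddingOfLTEmbedding⟩

namespace S13
variable (β : Ordinal.{u})

theorem ga_eq : omega0 ^ (β + 1) = omega0 ^ β * omega0 := by
  rw [add_one_eq_succ, opow_succ]

theorem al_pos : (0 : Ordinal.{u}) < omega0 ^ β := opow_pos _ omega0_pos

noncomputable def m (p : ℕ × Iio (omega0 ^ β)) : Iio (omega0 ^ (β + 1)) :=
  ⟨omega0 ^ β * p.1 + p.2.1, by
    rw [ga_eq]
    have h1 : omega0 ^ β * p.1 + p.2.1 < omega0 ^ β * p.1 + omega0 ^ β :=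
      add_lt_add_right p.2.2 _
    rw [← mul_succ, ← natCast_succ] at h1
    exact h1.trans_le (mul_le_mul_right (nat_lt_omega0 _).le _)⟩

theorem m_lt_m {p q : ℕ × Iio (omega0 ^ β)}
    (h : Prod.Lex ((· < ·) : ℕ → ℕ → Prop) ((· < ·) : Iio (omega0 ^ β) → _ → Prop) p q) :
    m β p < m β q := by
  rw [Prod.lex_def] at h
  show (omega0 ^ β * p.1 + p.2.1 : Ordinal) < omega0 ^ β * q.1 + q.2.1
  rcases h with h | ⟨h1, h2⟩
  · have e1 : omega0 ^ β * p.1 + p.2.1 < omega0 ^ β * (p.1 + 1 : ℕ) := by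
      rw [natCast_succ, mul_succ]; exact add_lt_add_right p.2.2 _
    refine e1.trans_le (le_trans (mul_le_mul_right ?_ _) (le_self_add))
    exact_mod_cast Nat.succ_le_of_lt h
  · rw [h1]; exact add_lt_add_right (Subtype.coe_lt_coe.2 h2) _


theorem lex_trich (p q : ℕ × Iio (omega0 ^ β)) :
    Prod.Lex ((· < ·) : ℕ → ℕ → Prop) ((· < ·) : Iio (omega0 ^ β) → _ → Prop) p q ∨ p = q ∨
      Prod.Lex ((· < ·) : ℕ → ℕ → Prop) ((· < ·) : Iio (omega0 ^ β) → _ → Prop) q p := by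
  obtain ⟨i, y⟩ := p; obtain ⟨j, z⟩ := q
  rcases lt_trichotomy i j with h | rfl | h
  · exact Or.inl (Prod.Lex.left _ _ h)
  · rcases lt_trichotomy y z with h | rfl | h
    · exact Or.inl (Prod.Lex.right _ h)
    · exact Or.inr (Or.inl rfl)
    · exact Or.inr (Or.inr (Prod.Lex.right _ h))
  · exact Or.inr (Or.inr (Prod.Lex.left _ _ h))

theorem m_lt_iff {p q : ℕ × Iio (omega0 ^ β)} :
    m β p < m β q ↔
      Prod.Lex ((· < ·) : ℕ → ℕ → Prop) ((· < ·) : Iio (omega0 ^ β) → _ → Prop) p q := by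
  refine ⟨fun h => ?_, m_lt_m β⟩
  rcases lex_trich β p q with hl | rfl | hl
  · exact hl
  · exact absurd h (lt_irrefl _)
  · exact absurd (m_lt_m β hl) (asymm h)

theorem m_inj : Function.Injective (m β) := by
  intro p q h
  rcases lex_trich β p q with hl | rfl | hl
  · exact absurd (m_lt_m β hl) (by rw [h]; exact lt_irrefl _)
  · rfl
  · exact absurd (m_lt_m β hl) (by rw [h]; exact lt_irrefl _)

theorem m_surj : Function.Surjective (m β) := by
  intro x
  have hx : x.1 < omega0 ^ β * omega0 := by rw [← ga_eq]; exact x.2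
  have hd : x.1 / omega0 ^ β < omega0 := (div_lt (al_pos β).ne').2 hx
  obtain ⟨n, hn⟩ := lt_omega0.1 hd
  refine ⟨(n, ⟨x.1 % omega0 ^ β, mod_lt _ (al_pos β).ne'⟩), ?_⟩
  apply Subtype.ext
  show omega0 ^ β * n + x.1 % omega0 ^ β = x.1
  rw [← hn, div_add_mod]

noncomputable def mE : (ℕ × Iio (omega0 ^ β)) ≃ Iio (omega0 ^ (β + 1)) :=
  Equiv.ofBijective (m β) ⟨m_inj β, m_surj β⟩

theorem mE_apply (p) : mE β p = m β p := rfl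

end S13
namespace S13
variable (β : Ordinal.{u})

def Sec (A : Set (Iio (omega0 ^ (β + 1)))) (i : ℕ) : Set (Iio (omega0 ^ β)) :=
  {y | m β (i, y) ∈ A}

noncomputable def tcol (A : Set (Iio (omega0 ^ (β + 1)))) (i : ℕ) : Ordinal.{u+1} :=
  type ((· < ·) : Sec β A i → Sec β A i → Prop)

theorem pos_iff (A : Set (Iio (omega0 ^ (β + 1)))) (i : ℕ) :
    Nonempty (Iio (omega0 ^ β) ↪o Sec β A i) ↔
      lift.{u+1} (omega0 ^ β) ≤ tcol β A i := by
  rw [emb_iff, type_Iio]; rfl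

theorem principal_lift {o : Ordinal.{u}} (h : Principal (· + ·) o) :
    Principal (· + ·) (lift.{u+1} o) := by
  intro a b ha hb
  obtain ⟨a', ha', rfl⟩ := lt_lift_iff.1 ha
  obtain ⟨b', hb', rfl⟩ := lt_lift_iff.1 hb
  show lift.{u+1} a' + lift.{u+1} b' < lift.{u+1} o
  rw [← lift_add]
  exact lift_lt.2 (h ha' hb')

theorem no_strictmono {γ : Ordinal.{u}} {B : Ordinal.{u+1}} (hB : B < lift.{u+1} γ)
    (h : Iio γ → Ordinal.{u+1}) (hmono : ∀ x y : Iio γ, x < y → h x < h y)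
    (hbd : ∀ x, h x < B) : False := by
  have key : ∀ o : Ordinal.{u}, ∀ ho : o < γ, lift.{u+1} o ≤ h ⟨o, ho⟩ := by
    intro o
    induction o using Ordinal.induction with
    | h o IH =>
      intro ho
      by_contra hc
      push_neg at hc
      obtain ⟨y, hy1, hy2⟩ := lt_lift_iff.1 hc
      have h3 := IH y hy1 (hy1.trans ho)
      rw [hy2] at h3
      exact absurd (h3.trans_lt (hmono ⟨y, hy1.trans ho⟩ ⟨o, ho⟩ (Subtype.mk_lt_mk.2 hy1)))
        (lt_irrefl _)
  obtain ⟨y, hy1, hy2⟩ := lt_lift_iff.1 hB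
  exact absurd ((key y hy1).trans_lt (hbd ⟨y, hy1⟩)) (by rw [hy2]; exact lt_irrefl _)

theorem no_emb (A : Set (Iio (omega0 ^ (β + 1))))
    (hfin : {i : ℕ | Nonempty (Iio (omega0 ^ β) ↪o Sec β A i)}.Finite) :
    ¬ Nonempty (Iio (omega0 ^ (β + 1)) ↪o A) := by
  rintro ⟨f⟩
  set α' : Ordinal.{u+1} := lift.{u+1} (omega0 ^ β) with hα'
  have hα'pos : 0 < α' := by
    have := lift_lt.{u+1}.2 (al_pos β)
    rwa [lift_zero] at this
  have hpr : Principal (· + ·) α' := principal_lift (principal_add_omega0_opow β)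
  obtain ⟨M, hM⟩ : ∃ M : ℕ, ∀ i, M ≤ i → tcol β A i < α' := by
    obtain ⟨M, hM⟩ := hfin.bddAbove
    refine ⟨M + 1, fun i hi => ?_⟩
    by_contra hc
    have hmem : i ∈ {i : ℕ | Nonempty (Iio (omega0 ^ β) ↪o Sec β A i)} :=
      (pos_iff β A i).2 (le_of_not_gt hc)
    have := hM hmem
    omega
  classical
  set tt : ℕ → Ordinal.{u+1} := fun j => if M ≤ j then tcol β A j else 0 with htt
  set su : ℕ → Ordinal.{u+1} := fun k => Nat.rec 0 (fun n ih => ih + tt n) k with hsu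
  have htt_lt : ∀ j, tt j < α' := by
    intro j
    rw [htt]; dsimp only; split
    · exact hM j ‹_›
    · exact hα'pos
  have hsu_lt : ∀ k, su k < α' := by
    intro k; induction k with
    | zero => exact hα'pos
    | succ k ih => exact hpr ih (htt_lt k)
  have hsu_mono : Monotone su := by
    apply monotone_nat_of_le_succ
    intro k
    exact le_self_add
  -- the rank function on pairs
  set G : (p : ℕ × Iio (omega0 ^ β)) → p.2 ∈ Sec β A p.1 → Ordinal.{u+1} := fun p hp =>
    if p.1 < M then lift.{u+1} (m β p).1
    else α' * M + (su p.1 + typein ((· < ·) : Sec β A p.1 → Sec β A p.1 → Prop) ⟨p.2, hp⟩)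
    with hG
  have hsmall : ∀ p : ℕ × Iio (omega0 ^ β), p.1 < M → lift.{u+1} (m β p).1 < α' * M := by
    intro p hpM
    have h1 : (m β p).1 < omega0 ^ β * M := by
      show omega0 ^ β * p.1 + p.2.1 < _
      have e1 : omega0 ^ β * p.1 + p.2.1 < omega0 ^ β * (p.1 + 1 : ℕ) := by
        rw [natCast_succ, mul_succ]; exact add_lt_add_right p.2.2 _
      exact e1.trans_le (mul_le_mul_right (by exact_mod_cast hpM) _)
    have := lift_lt.{u+1}.2 h1
    rwa [lift_mul, lift_natCast, ← hα'] at this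
  have claim1 : ∀ p hp, G p hp < α' * M + α' := by
    intro p hp
    rw [hG]; dsimp only; split
    · exact lt_of_lt_of_le (hsmall p ‹_›) (le_self_add)
    · rename_i hpM
      refine add_lt_add_right (hpr (hsu_lt _) ?_) _
      have h1 := typein_lt_type ((· < ·) : Sec β A p.1 → Sec β A p.1 → Prop)
        (⟨p.2, hp⟩ : Sec β A p.1)
      have h2 : tcol β A p.1 = tt p.1 := by rw [htt]; dsimp only; rw [if_pos (le_of_not_gt hpM)]
      calc typein ((· < ·) : Sec β A p.1 → Sec β A p.1 → Prop) (⟨p.2, hp⟩ : Sec β A p.1)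
          < tcol β A p.1 := h1
        _ = tt p.1 := h2
        _ < α' := htt_lt _
  have claim2 : ∀ p q hp hq, Prod.Lex ((· < ·) : ℕ → ℕ → Prop)
      ((· < ·) : Iio (omega0 ^ β) → _ → Prop) p q → G p hp < G q hq := by
    intro p q hp hq hlex
    obtain ⟨i, y⟩ := p; obtain ⟨j, z⟩ := q
    rw [Prod.lex_def] at hlex
    have hmlt : m β (i, y) < m β (j, z) := m_lt_m β (Prod.lex_def.2 hlex)
    rcases hlex with h | ⟨h1, h2⟩
    · by_cases hi : i < M <;> by_cases hj : j < M
      · rw [hG]; dsimp only; rw [if_pos hi, if_pos hj]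
        exact lift_lt.2 hmlt
      · rw [hG]; dsimp only; rw [if_pos hi, if_neg hj]
        exact lt_of_lt_of_le (hsmall (i, y) hi) (le_self_add)
      · have h' : i < j := h
        have := le_of_not_gt hi
        omega
      · rw [hG]; dsimp only; rw [if_neg hi, if_neg hj]
        refine add_lt_add_right ?_ _
        have h1 := typein_lt_type ((· < ·) : Sec β A i → Sec β A i → Prop)
          (⟨y, hp⟩ : Sec β A i)
        have h2 : tcol β A i = tt i := by rw [htt]; dsimp only; rw [if_pos (le_of_not_gt hi)]
        have key1 : su i + typein ((· < ·) : Sec β A i → Sec β A i → Prop)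
            (⟨y, hp⟩ : Sec β A i) < su (i + 1) :=
          add_lt_add_right (by rw [← h2]; exact h1) _
        have h3 : i < j := by simpa using h
        calc su i + typein ((· < ·) : Sec β A i → Sec β A i → Prop) (⟨y, hp⟩ : Sec β A i)
            < su (i + 1) := key1
          _ ≤ su j := hsu_mono h3
          _ ≤ su j + typein ((· < ·) : Sec β A j → Sec β A j → Prop) (⟨z, hq⟩ : Sec β A j) :=
              le_self_add
    · simp only at h1 h2
      subst h1
      by_cases hi : i < M
      · rw [hG]; dsimp only; rw [if_pos hi, if_pos hi]
        exact lift_lt.2 hmlt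
      · rw [hG]; dsimp only; rw [if_neg hi, if_neg hi]
        refine add_lt_add_right (add_lt_add_right ?_ _) _
        exact (typein_lt_typein _).2 (Subtype.mk_lt_mk.2 h2)
  -- membership of decomposed points
  have hmem : ∀ a : A, ((mE β).symm (a : Iio (omega0 ^ (β + 1)))).2 ∈
      Sec β A ((mE β).symm (a : Iio (omega0 ^ (β + 1)))).1 := by
    intro a
    show m β (_, _) ∈ A
    rw [Prod.mk.eta]
    show mE β ((mE β).symm (a : Iio (omega0 ^ (β + 1)))) ∈ A
    rw [Equiv.apply_symm_apply]
    exact a.2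
  set H : Iio (omega0 ^ (β + 1)) → Ordinal.{u+1} :=
    fun x => G ((mE β).symm (f x : Iio (omega0 ^ (β + 1)))) (hmem (f x)) with hH
  have hB : α' * M + α' < lift.{u+1} (omega0 ^ (β + 1)) := by
    have e1 : lift.{u+1} (omega0 ^ (β + 1)) = α' * omega0 := by
      rw [ga_eq, lift_mul, lift_omega0, ← hα']
    rw [e1]
    have e2 : α' * M + α' = α' * ((M + 1 : ℕ) : Ordinal) := by
      rw [natCast_succ, mul_succ]
    rw [e2]
    exact (mul_lt_mul_iff_right₀ hα'pos).2 (nat_lt_omega0 _)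
  refine no_strictmono hB H (fun x y hxy => ?_) (fun x => claim1 _ _)
  have hf : (f x : Iio (omega0 ^ (β + 1))) < (f y : Iio (omega0 ^ (β + 1))) :=
    Subtype.coe_lt_coe.2 (f.strictMono hxy)
  have hsym : ∀ z : Iio (omega0 ^ (β + 1)), m β ((mE β).symm z) = z := fun z =>
    (mE β).apply_symm_apply z
  have hlex : Prod.Lex ((· < ·) : ℕ → ℕ → Prop) ((· < ·) : Iio (omega0 ^ β) → _ → Prop)
      ((mE β).symm (f x : Iio (omega0 ^ (β + 1)))) ((mE β).symm (f y : Iio (omega0 ^ (β + 1)))) := by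
    rw [← m_lt_iff β, hsym, hsym]
    exact hf
  exact claim2 _ _ _ _ hlex


theorem emb_of_infinite (A : Set (Iio (omega0 ^ (β + 1))))
    (hinf : {i : ℕ | Nonempty (Iio (omega0 ^ β) ↪o Sec β A i)}.Infinite) :
    Nonempty (Iio (omega0 ^ (β + 1)) ↪o A) := by
  set P := {i : ℕ | Nonempty (Iio (omega0 ^ β) ↪o Sec β A i)} with hP
  haveI := hinf.to_subtype
  set n : ℕ → ℕ := fun k => (Nat.Subtype.orderIsoOfNat P k : ℕ) with hn
  have hnmono : StrictMono n := fun a b hab =>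
    Subtype.coe_lt_coe.2 ((Nat.Subtype.orderIsoOfNat P).strictMono hab)
  have hnP : ∀ k, n k ∈ P := fun k => (Nat.Subtype.orderIsoOfNat P k).2
  have hg : ∀ k, Nonempty (Iio (omega0 ^ β) ↪o Sec β A (n k)) := fun k => hnP k
  set g : (k : ℕ) → Iio (omega0 ^ β) ↪o Sec β A (n k) := fun k => (hg k).some with hgdef
  -- target map on pairs
  set T : ℕ × Iio (omega0 ^ β) → ℕ × Iio (omega0 ^ β) := fun p =>
    (n p.1, (g p.1 p.2 : Iio (omega0 ^ β))) with hT
  have hTmem : ∀ p, m β (T p) ∈ A := by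
    intro p
    exact (g p.1 p.2).2
  have hTlex : ∀ p q, Prod.Lex ((· < ·) : ℕ → ℕ → Prop)
      ((· < ·) : Iio (omega0 ^ β) → _ → Prop) p q →
      Prod.Lex ((· < ·) : ℕ → ℕ → Prop) ((· < ·) : Iio (omega0 ^ β) → _ → Prop) (T p) (T q) := by
    intro p q hlex
    obtain ⟨i, y⟩ := p; obtain ⟨j, z⟩ := q
    rw [Prod.lex_def] at hlex ⊢
    rcases hlex with h | ⟨h1, h2⟩
    · exact Or.inl (hnmono h)
    · simp only at h1 h2
      subst h1
      exact Or.inr ⟨rfl, Subtype.coe_lt_coe.2 ((g i).strictMono h2)⟩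
  refine ⟨OrderEmbedding.ofStrictMono
    (fun x => (⟨m β (T ((mE β).symm x)), hTmem _⟩ : A)) ?_⟩
  intro x y hxy
  have hsym : ∀ z : Iio (omega0 ^ (β + 1)), m β ((mE β).symm z) = z := fun z =>
    (mE β).apply_symm_apply z
  have hlex : Prod.Lex ((· < ·) : ℕ → ℕ → Prop) ((· < ·) : Iio (omega0 ^ β) → _ → Prop)
      ((mE β).symm x) ((mE β).symm y) := by
    rw [← m_lt_iff β, hsym, hsym]
    exact hxy
  exact Subtype.mk_lt_mk.2 (m_lt_m β (hTlex _ _ hlex))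

end S13

/-- For every β ≥ 1, the ideal I_{ω^{β+1}} on ω^{β+1} is isomorphic, via a bijection
of the underlying sets, to the Fubini product Fin × I_{ω^β} on ω × ω^β. -/
theorem stmt13 (β : Ordinal) (hβ : 1 ≤ β) :
    ∃ e : (Set.Iio (omega0 ^ (β + 1))) ≃ ℕ × (Set.Iio (omega0 ^ β)),
      ∀ A : Set (Set.Iio (omega0 ^ (β + 1))),
        A ∈ ordIdeal (omega0 ^ (β + 1)) ↔ e '' A ∈ fub (ordIdeal (omega0 ^ β)) := by
  refine ⟨(S13.mE β).symm, fun A => ?_⟩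
  have hsec : ∀ i : ℕ, {y : Iio (omega0 ^ β) | (i, y) ∈ (S13.mE β).symm '' A} = S13.Sec β A i := by
    intro i
    ext y
    rw [mem_setOf_eq, Set.mem_image_equiv, Equiv.symm_symm]
    rfl
  have hmain : (¬ Nonempty (Iio (omega0 ^ (β + 1)) ↪o A)) ↔
      {i : ℕ | Nonempty (Iio (omega0 ^ β) ↪o S13.Sec β A i)}.Finite := by
    constructor
    · intro hA
      by_contra hc
      exact hA (S13.emb_of_infinite β A hc)
    · intro hfin
      exact S13.no_emb β A hfin
  show (¬ _) ↔ _ ∈ fub _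
  rw [hmain]
  show _ ↔ {i : ℕ | {y : Iio (omega0 ^ β) | (i, y) ∈ (S13.mE β).symm '' A}
    ∉ ordIdeal (omega0 ^ β)}.Finite
  have : ∀ i : ℕ, ({y : Iio (omega0 ^ β) | (i, y) ∈ (S13.mE β).symm '' A}
      ∉ ordIdeal (omega0 ^ β)) ↔ Nonempty (Iio (omega0 ^ β) ↪o S13.Sec β A i) := by
    intro i
    rw [hsec i]
    exact not_not
  simp only [this]
end
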